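/- Let A → BC be a rule of an SLP 𝒮, let w_A = deriv(A) = deriv(B)·deriv(C), let M be an NFA accepting non-tail-spanning marked words, and let i, j be states. Then a partial marker set Λ_A belongs to T_A[i, j] (i.e., Λ_A is compatible with w_A, ins(w_A, Λ_A) is non-tail-spanning, and M goes from i to j reading ins(w_A, Λ_A)) if and only if there exist a state k and partial marker sets Λ_B ∈ T_B[i, k] and Λ_C ∈ T_C[k, j] such that Λ_A = Λ_B ∪ (Λ_C + |deriv(B)|), where Λ + s denotes the s-rightshift. -/

import Mathlib

/-- A non-tail-spanning marked word `A₁ b₁ A₂ b₂ … Aₙ bₙ` (the trailing set symbol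
`A_{n+1}` is empty and omitted). -/
abbrev MWord (Γ Alph : Type*) := List (Finset Γ × Alph)

/-- The `s`-rightshift of a partial marker set. -/
def rshift {Γ : Type*} [DecidableEq Γ] (Λ : Finset (Γ × ℕ)) (s : ℕ) : Finset (Γ × ℕ) :=
  Λ.image (fun p => (p.1, p.2 + s))

/-- Insert the markers of `Λ` into the document `d` (positions `> |d|` are not placed;
for non-tail-spanning `Λ` no marker is lost). -/
def ins {Γ Alph : Type*} [DecidableEq Γ] (d : List Alph) (Λ : Finset (Γ × ℕ)) :
    MWord Γ Alph :=
  (d.zipIdx.map Prod.swap).map (fun ib => ((Λ.filter (fun p => p.2 = ib.1 + 1)).image Prod.fst, ib.2))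

/-- Erase all set symbols. -/
def getWord {Γ Alph : Type*} (w : MWord Γ Alph) : List Alph := w.map Prod.snd

/-- The partial marker set `{(σ, i) : σ ∈ Aᵢ}` encoded by a marked word. -/
def mkd {Γ Alph : Type*} [DecidableEq Γ] (w : MWord Γ Alph) : Finset (Γ × ℕ) :=
  ((w.zipIdx.map Prod.swap).map (fun ib => ib.2.1.image (fun σ => (σ, ib.1 + 1)))).foldr (· ∪ ·) ∅

/-- Serialize a marked word into the sequence of symbols (over `𝒫(Γ_𝒳) ∪ Σ`) read
by an automaton: `A₁, b₁, A₂, b₂, …, Aₙ, bₙ`. -/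
def ser {Γ Alph : Type*} (w : MWord Γ Alph) : List (Finset Γ ⊕ Alph) :=
  w.flatMap (fun Ab => [Sum.inl Ab.1, Sum.inr Ab.2])

/-- NFA transition function extended to words. -/
def dstar {Q A : Type*} (δ : Q → A → Set Q) : List A → Q → Set Q
  | [], p => {p}
  | a :: w, p => ⋃ q ∈ δ p a, dstar δ w q

/-- `T_X[i, j]` for the word `w = deriv(X)`. -/
def Tset {Γ Alph Q : Type*} [DecidableEq Γ] (δ : Q → (Finset Γ ⊕ Alph) → Set Q)
    (w : List Alph) (i j : Q) : Set (Finset (Γ × ℕ)) :=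
  {Λ | (∀ p ∈ Λ, 1 ≤ p.2 ∧ p.2 ≤ w.length + 1) ∧ (∀ p ∈ Λ, p.2 ≠ w.length + 1) ∧
    j ∈ dstar δ (ser (ins w Λ)) i}


lemma mem_dstar_append {Q A : Type*} (δ : Q → A → Set Q) (u v : List A) (i j : Q) :
    j ∈ dstar δ (u ++ v) i ↔ ∃ k, k ∈ dstar δ u i ∧ j ∈ dstar δ v k := by
  induction u generalizing i with
  | nil => simp [dstar]
  | cons a u ih =>
    simp only [List.cons_append, dstar, Set.mem_iUnion, List.append_eq, ih]
    tauto

lemma ins_append' {Γ Alph : Type*} [DecidableEq Γ] (wB wC : List Alph)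
    (ΛB ΛC : Finset (Γ × ℕ)) (hB : ∀ p ∈ ΛB, p.2 ≤ wB.length)
    (hC : ∀ p ∈ ΛC, 1 ≤ p.2) :
    ins (wB ++ wC) (ΛB ∪ rshift ΛC wB.length) = ins wB ΛB ++ ins wC ΛC := by
  unfold ins
  rw [List.zipIdx_append, List.zipIdx_eq_map_add (l := wC)]
  simp only [List.map_append, List.map_map]
  congr 1
  · apply List.map_congr_left
    rintro ⟨b, n⟩ hn
    have hlt : n < wB.length := by
      have := List.snd_lt_of_mem_zipIdx hn; simpa using this
    simp only [Function.comp, Prod.swap, Finset.filter_union]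
    have : (rshift ΛC wB.length).filter (fun p => p.2 = n + 1) = ∅ := by
      apply Finset.filter_false_of_mem
      rintro p hp
      simp only [rshift, Finset.mem_image] at hp
      obtain ⟨q, hq, rfl⟩ := hp
      have := hC q hq
      simp; omega
    rw [this, Finset.union_empty]
  · apply List.map_congr_left
    rintro ⟨b, n⟩ hn
    simp only [Function.comp, Prod.swap, Nat.zero_add]
    rw [show wB.length + n = n + wB.length by omega]
    simp only [Finset.filter_union]
    have h1 : ΛB.filter (fun p => p.2 = n + wB.length + 1) = ∅ := by
      apply Finset.filter_false_of_mem
      intro p hp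
      have := hB p hp
      simp; omega
    rw [h1, Finset.empty_union]
    have h2 : (rshift ΛC wB.length).filter (fun p => p.2 = n + wB.length + 1)
        = rshift (ΛC.filter (fun p => p.2 = n + 1)) wB.length := by
      unfold rshift
      rw [Finset.filter_image]
      congr 1
      ext p
      simp only [Finset.mem_filter, Function.comp]
      constructor <;> (rintro ⟨h, h'⟩; exact ⟨h, by omega⟩)
    rw [h2]
    unfold rshift
    rw [Finset.image_image]
    rfl

/-- For a rule `A → BC` (so `deriv(A) = deriv(B) ++ deriv(C)`):
`Λ_A ∈ T_A[i, j]` iff there are a state `k` and `Λ_B ∈ T_B[i, k]`,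
`Λ_C ∈ T_C[k, j]` with `Λ_A = Λ_B ∪ (Λ_C + |deriv(B)|)`. -/
theorem Tset_append {Γ Alph Q : Type*} [DecidableEq Γ]
    (δ : Q → (Finset Γ ⊕ Alph) → Set Q) (wB wC : List Alph) (i j : Q)
    (ΛA : Finset (Γ × ℕ)) :
    ΛA ∈ Tset δ (wB ++ wC) i j ↔
      ∃ (k : Q) (ΛB ΛC : Finset (Γ × ℕ)), ΛB ∈ Tset δ wB i k ∧ ΛC ∈ Tset δ wC k j ∧
        ΛA = ΛB ∪ rshift ΛC wB.length := by
  simp only [Tset, Set.mem_setOf_eq]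
  constructor
  · rintro ⟨h1, h2, h3⟩
    set s := wB.length with hs
    set ΛB := ΛA.filter (fun p => p.2 ≤ s) with hΛB
    set ΛC := (ΛA.filter (fun p => ¬ p.2 ≤ s)).image (fun p => (p.1, p.2 - s)) with hΛC
    have hr : rshift ΛC s = ΛA.filter (fun p => ¬ p.2 ≤ s) := by
      ext x
      simp only [rshift, hΛC, Finset.mem_image, Finset.mem_filter]
      constructor
      · rintro ⟨q, ⟨p, ⟨hpA, hps⟩, rfl⟩, rfl⟩
        have hp2 : p.2 - s + s = p.2 := by omega
        simp only [hp2, Prod.mk.eta]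
        exact ⟨hpA, hps⟩
      · rintro ⟨hxA, hxs⟩
        exact ⟨(x.1, x.2 - s), ⟨x, ⟨hxA, hxs⟩, rfl⟩,
          Prod.ext rfl (show x.2 - s + s = x.2 by omega)⟩
    have hsplit : ΛA = ΛB ∪ rshift ΛC s := by
      rw [hr, hΛB, Finset.filter_union_filter_not_eq]
    have hB' : ∀ p ∈ ΛB, p.2 ≤ s := fun p hp => (Finset.mem_filter.1 hp).2
    have hC' : ∀ p ∈ ΛC, 1 ≤ p.2 := by
      intro p hp
      simp only [hΛC, Finset.mem_image, Finset.mem_filter] at hp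
      obtain ⟨q, ⟨hqA, hqs⟩, rfl⟩ := hp
      show 1 ≤ q.2 - s
      omega
    have hins : ins (wB ++ wC) ΛA = ins wB ΛB ++ ins wC ΛC := by
      rw [hsplit, hs]
      exact ins_append' wB wC ΛB ΛC (hs ▸ hB') hC'
    rw [hins, show ser (ins wB ΛB ++ ins wC ΛC) = ser (ins wB ΛB) ++ ser (ins wC ΛC)
      from List.flatMap_append] at h3
    obtain ⟨k, hk1, hk2⟩ := (mem_dstar_append δ _ _ i j).1 h3
    refine ⟨k, ΛB, ΛC, ⟨?_, ?_, hk1⟩, ⟨?_, ?_, hk2⟩, hsplit⟩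
    · intro p hp
      obtain ⟨hpA, hps⟩ := Finset.mem_filter.1 hp
      have := (h1 p hpA).1
      omega
    · intro p hp
      obtain ⟨hpA, hps⟩ := Finset.mem_filter.1 hp
      omega
    · intro p hp
      simp only [hΛC, Finset.mem_image, Finset.mem_filter] at hp
      obtain ⟨q, ⟨hqA, hqs⟩, rfl⟩ := hp
      have h1q := (h1 q hqA).2
      have h2q := h2 q hqA
      simp only [List.length_append] at h1q h2q
      show 1 ≤ q.2 - s ∧ q.2 - s ≤ wC.length + 1
      omega
    · intro p hp
      simp only [hΛC, Finset.mem_image, Finset.mem_filter] at hp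
      obtain ⟨q, ⟨hqA, hqs⟩, rfl⟩ := hp
      have h1q := (h1 q hqA).2
      have h2q := h2 q hqA
      simp only [List.length_append] at h1q h2q
      show q.2 - s ≠ wC.length + 1
      omega
  · rintro ⟨k, ΛB, ΛC, ⟨hB1, hB2, hB3⟩, ⟨hC1, hC2, hC3⟩, rfl⟩
    have hB' : ∀ p ∈ ΛB, p.2 ≤ wB.length := by
      intro p hp
      have := hB1 p hp
      have := hB2 p hp
      omega
    have hC' : ∀ p ∈ ΛC, 1 ≤ p.2 := fun p hp => (hC1 p hp).1
    refine ⟨?_, ?_, ?_⟩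
    · intro p hp
      rcases Finset.mem_union.1 hp with h | h
      · have := hB1 p h
        simp only [List.length_append]
        omega
      · simp only [rshift, Finset.mem_image] at h
        obtain ⟨q, hq, rfl⟩ := h
        have := hC1 q hq
        simp only [List.length_append]
        show 1 ≤ q.2 + wB.length ∧ q.2 + wB.length ≤ wB.length + wC.length + 1
        omega
    · intro p hp
      rcases Finset.mem_union.1 hp with h | h
      · have := hB' p h
        simp only [List.length_append]
        omega
      · simp only [rshift, Finset.mem_image] at h
        obtain ⟨q, hq, rfl⟩ := h
        have := hC1 q hq
        have := hC2 q hq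
        simp only [List.length_append]
        show q.2 + wB.length ≠ wB.length + wC.length + 1
        omega
    · rw [ins_append' wB wC ΛB ΛC hB' hC',
        show ser (ins wB ΛB ++ ins wC ΛC) = ser (ins wB ΛB) ++ ser (ins wC ΛC)
          from List.flatMap_append]
      exact (mem_dstar_append δ _ _ i j).2 ⟨k, hB3, hC3⟩
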